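/- If X has density f(x) = exp(−|x|^p/(p μ^p)) / (2 Γ((p+1)/p) p^{1/p} μ) for some μ > 0 and p ≥ 1, then E[|X|^p]^{1/p} = μ and equality holds in the bound E[|X|^p]^{1/p} = 2^{h(X)} / (2 Γ((p+1)/p) (p·e)^{1/p}). -/

import Mathlib

open MeasureTheory ProbabilityTheory Real Filter
open scoped ENNReal NNReal

/-- Differential entropy (base 2) of a density `f` with respect to measure `μ`. -/
noncomputable def dEnt {E : Type*} [MeasurableSpace E] (μ : Measure E) (f : E → ℝ) : ℝ :=
  - ∫ x, f x * Real.logb 2 (f x) ∂μ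

/-- `f` is the probability density of `X` with respect to `μ`. -/
def IsDensity {Ω E : Type*} [MeasurableSpace Ω] [MeasurableSpace E]
    (P : Measure Ω) (μ : Measure E) (X : Ω → E) (f : E → ℝ) : Prop :=
  Measure.map X P = μ.withDensity (fun x => ENNReal.ofReal (f x))

/-- The generalized Gaussian density with shape `p` and scale `μ`. -/
noncomputable def genGaussianDensity (p μ : ℝ) (x : ℝ) : ℝ :=
  Real.exp (-(|x| ^ p) / (p * μ ^ p)) / (2 * Real.Gamma ((p + 1) / p) * p ^ (1 / p) * μ)

lemma aux_integrable_comp_abs {f : ℝ → ℝ} (hf : IntegrableOn f (Set.Ioi 0)) :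
    Integrable (fun x : ℝ => f |x|) := by
  have h1 : IntegrableOn (fun x : ℝ => f |x|) (Set.Ioi 0) := by
    refine hf.congr_fun (fun x hx => ?_) measurableSet_Ioi
    rw [abs_of_pos hx]
  have h2 : IntegrableOn (fun x : ℝ => f |x|) (Set.Iic 0) := by
    rw [← Measure.map_neg_eq_self (volume : Measure ℝ)]
    have m : MeasurableEmbedding fun x : ℝ => -x := (Homeomorph.neg ℝ).measurableEmbedding
    rw [m.integrableOn_map_iff]
    simp_rw [Function.comp_def, abs_neg, Set.neg_preimage, Set.neg_Iic, neg_zero]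
    exact (integrableOn_Ici_iff_integrableOn_Ioi).mpr h1
  have := h2.union h1
  rwa [Set.Iic_union_Ioi, integrableOn_univ] at this

lemma aux_integrable_rpow_abs_mul_exp {s p b : ℝ} (hs : -1 < s) (hp : 1 ≤ p) (hb : 0 < b) :
    Integrable (fun x : ℝ => |x| ^ s * Real.exp (-b * |x| ^ p)) :=
  aux_integrable_comp_abs (f := fun y => y ^ s * Real.exp (-b * y ^ p))
    (integrableOn_rpow_mul_exp_neg_mul_rpow hs (by linarith) hb)

lemma aux_integrable_exp_abs {p b : ℝ} (hp : 1 ≤ p) (hb : 0 < b) :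
    Integrable (fun x : ℝ => Real.exp (-b * |x| ^ p)) := by
  have := aux_integrable_rpow_abs_mul_exp (s := 0) (by norm_num) hp hb
  simpa using this

theorem genGaussian_achieves_Lp_bound {Ω : Type*} [MeasurableSpace Ω]
    (P : Measure Ω) [IsProbabilityMeasure P]
    (X : Ω → ℝ) (hX : Measurable X)
    (p μ : ℝ) (hp : 1 ≤ p) (hμ : 0 < μ)
    (hf : IsDensity P volume X (genGaussianDensity p μ)) :
    (∫ ω, |X ω| ^ p ∂P) ^ (1 / p) = μ ∧
    (∫ ω, |X ω| ^ p ∂P) ^ (1 / p) =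
      (2 : ℝ) ^ dEnt volume (genGaussianDensity p μ) /
        (2 * Real.Gamma ((p + 1) / p) * (p * Real.exp 1) ^ (1 / p)) := by
  have hp0 : 0 < p := by linarith
  have hμp : 0 < μ ^ p := rpow_pos_of_pos hμ p
  set b : ℝ := (p * μ ^ p)⁻¹ with hb_def
  have hb : 0 < b := by positivity
  have harg : ∀ x : ℝ, -(|x| ^ p) / (p * μ ^ p) = -b * |x| ^ p := by
    intro x; rw [hb_def]; ring
  have hG : 0 < Real.Gamma ((p + 1) / p) := Real.Gamma_pos_of_pos (by positivity)
  have hpr : (0:ℝ) < p ^ (1 / p) := rpow_pos_of_pos hp0 _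
  set C : ℝ := 2 * Real.Gamma ((p + 1) / p) * p ^ (1 / p) * μ with hC_def
  have hC : 0 < C := by positivity
  have hgg : ∀ x : ℝ, genGaussianDensity p μ x = Real.exp (-b * |x| ^ p) / C := by
    intro x; rw [genGaussianDensity, harg x]
  -- key exponent algebra
  have hexp1 : (p + 1) / p = 1 / p + 1 := by rw [add_div, div_self hp0.ne', add_comm]
  have hbinv : ∀ t : ℝ, b ^ (-t) = (p * μ ^ p) ^ t := by
    intro t
    rw [hb_def, inv_rpow (by positivity), ← rpow_neg (by positivity), neg_neg]
  -- normalization integral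
  have hA : ∫ x : ℝ, Real.exp (-b * |x| ^ p) = C := by
    rw [integral_comp_abs (f := fun y => Real.exp (-b * y ^ p)),
      integral_exp_neg_mul_rpow hp0 hb]
    have h1 : b ^ (-1 / p) = p ^ (1 / p) * μ := by
      rw [show (-1 : ℝ) / p = -(1 / p) by ring, hbinv, mul_rpow hp0.le hμp.le,
        ← rpow_mul hμ.le, mul_one_div_cancel hp0.ne', rpow_one]
    rw [h1, hC_def, hexp1]
    ring
  -- p-th moment integral
  have hB : ∫ x : ℝ, |x| ^ p * Real.exp (-b * |x| ^ p) = μ ^ p * C := by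
    rw [integral_comp_abs (f := fun y => y ^ p * Real.exp (-b * y ^ p)),
      integral_rpow_mul_exp_neg_mul_rpow hp0 (by linarith) hb]
    have h1 : b ^ (-(p + 1) / p) = p ^ (1 / p) * p * (μ ^ p * μ) := by
      rw [show -(p + 1) / p = -((p + 1) / p) by ring, hbinv, mul_rpow hp0.le hμp.le,
        ← rpow_mul hμ.le, show p * ((p + 1) / p) = p + 1 by field_simp, hexp1,
        rpow_add hp0, rpow_one, rpow_add hμ, rpow_one]
    rw [h1, hC_def]
    field_simp
  -- integrabilities
  have hI2 : Integrable (fun x : ℝ => |x| ^ p * Real.exp (-b * |x| ^ p)) :=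
    aux_integrable_rpow_abs_mul_exp (by linarith) hp hb
  have hI1 : Integrable (fun x : ℝ => Real.exp (-b * |x| ^ p)) :=
    aux_integrable_exp_abs hp hb
  -- continuity / measurability of the density
  have hcont : Continuous (genGaussianDensity p μ) := by
    unfold genGaussianDensity
    exact (((continuous_abs.rpow_const (fun x => Or.inr hp0.le)).neg.div_const _).rexp).div_const _
  -- the moment of X
  have hEX : ∫ ω, |X ω| ^ p ∂P = μ ^ p := by
    have hgm : AEStronglyMeasurable (fun x : ℝ => |x| ^ p) (Measure.map X P) :=
      (continuous_abs.rpow_const (fun x => Or.inr hp0.le)).aestronglyMeasurable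
    calc ∫ ω, |X ω| ^ p ∂P = ∫ x, |x| ^ p ∂(Measure.map X P) :=
          (integral_map hX.aemeasurable hgm).symm
      _ = ∫ x, genGaussianDensity p μ x * |x| ^ p := by
          rw [show Measure.map X P = _ from hf]
          rw [show (fun x => ENNReal.ofReal (genGaussianDensity p μ x))
              = (fun x => ((genGaussianDensity p μ x).toNNReal : ℝ≥0∞)) from rfl]
          rw [integral_withDensity_eq_integral_smul
              (show Measurable fun x => (genGaussianDensity p μ x).toNNReal from
                measurable_real_toNNReal.comp hcont.measurable) _]
          refine integral_congr_ae (Filter.Eventually.of_forall fun x => ?_)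
          have hx0 : 0 ≤ genGaussianDensity p μ x := by rw [hgg]; positivity
          simp [NNReal.smul_def, Real.coe_toNNReal _ hx0]
      _ = μ ^ p := by
          have : ∀ x : ℝ, genGaussianDensity p μ x * |x| ^ p
              = C⁻¹ * (|x| ^ p * Real.exp (-b * |x| ^ p)) := by
            intro x; rw [hgg]; ring
          simp_rw [this]
          rw [integral_const_mul, hB]
          field_simp
  have hLHS : (∫ ω, |X ω| ^ p ∂P) ^ (1 / p) = μ := by
    rw [hEX, ← rpow_mul hμ.le, mul_one_div_cancel hp0.ne', rpow_one]
  refine ⟨hLHS, hLHS.trans ?_⟩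
  -- entropy computation
  have hlog2 : Real.log 2 ≠ 0 := (Real.log_pos (by norm_num)).ne'
  have hent : dEnt volume (genGaussianDensity p μ) = (1 / p + Real.log C) / Real.log 2 := by
    rw [dEnt]
    have hpt : ∀ x : ℝ, genGaussianDensity p μ x * Real.logb 2 (genGaussianDensity p μ x)
        = (C⁻¹ * ((-b) * (|x| ^ p * Real.exp (-b * |x| ^ p)))
            - C⁻¹ * (Real.log C * Real.exp (-b * |x| ^ p))) / Real.log 2 := by
      intro x
      rw [Real.logb, hgg, Real.log_div (Real.exp_ne_zero _) hC.ne', Real.log_exp]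
      ring
    simp_rw [hpt]
    rw [integral_div, integral_sub ((hI2.const_mul _).const_mul _) ((hI1.const_mul _).const_mul _),
      integral_const_mul, integral_const_mul, integral_const_mul, integral_const_mul, hA, hB]
    have hbmu : b * (μ ^ p * C) = C / p := by
      rw [hb_def]; field_simp
    rw [show C⁻¹ * (-b * (μ ^ p * C)) = -(C⁻¹ * (b * (μ ^ p * C))) by ring, hbmu]
    field_simp
    ring
  rw [hent]
  rw [Real.rpow_def_of_pos (by norm_num : (0:ℝ) < 2)]
  rw [show Real.log 2 * ((1 / p + Real.log C) / Real.log 2) = 1 / p + Real.log C by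
    field_simp]
  rw [Real.exp_add, Real.exp_log hC, mul_rpow hp0.le (Real.exp_pos 1).le, Real.exp_one_rpow,
    hC_def]
  rw [eq_div_iff (ne_of_gt (mul_pos (mul_pos two_pos hG) (mul_pos hpr (Real.exp_pos _))))]
  ring
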